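/- Let E be a real Banach space and let X : E → E be a continuous vector field with modulus of continuity ε log ε: there exists a constant C > 0 such that ‖X(a) − X(b)‖ ≤ −C · ‖a − b‖ · log ‖a − b‖ whenever 0 < ‖a − b‖ < 1. Let T > 0 and let γ₁, γ₂ : [0, T] → E be two differentiable curves satisfying γ_i'(t) = X(γ_i(t)) for all t ∈ [0, T] and γ₁(0) = γ₂(0). Then γ₁(t) = γ₂(t) for all t ∈ [0, T]. In other words, vector fields with modulus of continuity ε log ε are uniquely integrable: the ODE x' = X(x) has at most one solution for a given initial condition. -/

import Mathlib

/-- Osgood-type uniqueness: a continuous vector field on a real Banach space with modulus of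
continuity `ε log ε` is uniquely integrable. -/
theorem osgood_uniqueness_eps_log_eps
    {E : Type*} [NormedAddCommGroup E] [NormedSpace ℝ E] [CompleteSpace E]
    (X : E → E) (hXcont : Continuous X)
    (C : ℝ) (hC : 0 < C)
    (hX : ∀ a b : E, 0 < ‖a - b‖ → ‖a - b‖ < 1 →
      ‖X a - X b‖ ≤ -C * ‖a - b‖ * Real.log ‖a - b‖)
    (T : ℝ) (hT : 0 < T)
    (γ₁ γ₂ : ℝ → E)
    (hγ₁ : ∀ t ∈ Set.Icc 0 T, HasDerivAt γ₁ (X (γ₁ t)) t)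
    (hγ₂ : ∀ t ∈ Set.Icc 0 T, HasDerivAt γ₂ (X (γ₂ t)) t)
    (h0 : γ₁ 0 = γ₂ 0) :
    ∀ t ∈ Set.Icc 0 T, γ₁ t = γ₂ t := by
  -- the difference and its derivative
  set f : ℝ → E := fun t => γ₁ t - γ₂ t with hf_def
  have hf' : ∀ t ∈ Set.Icc 0 T, HasDerivAt f (X (γ₁ t) - X (γ₂ t)) t := fun t ht =>
    (hγ₁ t ht).sub (hγ₂ t ht)
  have hfc : ContinuousOn f (Set.Icc 0 T) := fun t ht =>
    (hf' t ht).continuousAt.continuousWithinAt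
  -- key estimate: for every `L > 0`, `‖f t‖ ≤ exp (-(L * exp (-(2*C*t))))` on `[0, T]`
  have key : ∀ L : ℝ, 0 < L → ∀ t ∈ Set.Icc 0 T,
      ‖f t‖ ≤ Real.exp (-(L * Real.exp (-(2 * C * t)))) := by
    intro L hL
    set B : ℝ → ℝ := fun t => Real.exp (-(L * Real.exp (-(2 * C * t)))) with hB_def
    set B' : ℝ → ℝ := fun t => 2 * C * L * Real.exp (-(2 * C * t)) * B t with hB'_def
    have hB : ∀ x : ℝ, HasDerivAt B (B' x) x := by
      intro x
      have h1 : HasDerivAt (fun t : ℝ => -(2 * C * t)) (-(2 * C)) x := by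
        simpa [Pi.neg_def] using ((hasDerivAt_id x).const_mul (2 * C)).neg
      have h2 : HasDerivAt (fun t : ℝ => -(L * Real.exp (-(2 * C * t))))
          (-(L * (Real.exp (-(2 * C * x)) * -(2 * C)))) x := by
        exact ((h1.exp.const_mul L)).neg
      have := h2.exp
      convert this using 1
      simp only [hB'_def, hB_def]
      ring
    have ha : ‖f 0‖ ≤ B 0 := by
      simp only [hf_def, h0, sub_self, norm_zero, hB_def]
      positivity
    have bound : ∀ x ∈ Set.Ico 0 T, ‖f x‖ = B x → ‖X (γ₁ x) - X (γ₂ x)‖ < B' x := by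
      intro x hx heq
      have hBpos : 0 < B x := Real.exp_pos _
      have hBlt1 : B x < 1 := by
        rw [hB_def]
        apply Real.exp_lt_one_iff.mpr
        have : 0 < Real.exp (-(2 * C * x)) := Real.exp_pos _
        nlinarith
      have hxpos : 0 < ‖γ₁ x - γ₂ x‖ := by rw [show γ₁ x - γ₂ x = f x from rfl, heq]; exact hBpos
      have hxlt1 : ‖γ₁ x - γ₂ x‖ < 1 := by
        rw [show γ₁ x - γ₂ x = f x from rfl, heq]; exact hBlt1
      have hle := hX (γ₁ x) (γ₂ x) hxpos hxlt1
      have hnorm : ‖γ₁ x - γ₂ x‖ = B x := heq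
      rw [hnorm] at hle
      have hlog : Real.log (B x) = -(L * Real.exp (-(2 * C * x))) := by
        rw [hB_def]; exact Real.log_exp _
      rw [hlog] at hle
      calc ‖X (γ₁ x) - X (γ₂ x)‖ ≤ -C * B x * -(L * Real.exp (-(2 * C * x))) := hle
        _ < B' x := by
            simp only [hB'_def]
            have h1 : 0 < C * L * Real.exp (-(2 * C * x)) * B x := by positivity
            nlinarith [h1]
    intro t ht
    exact image_norm_le_of_norm_deriv_right_lt_deriv_boundary hfc
      (fun x hx => (hf' x (Set.Ico_subset_Icc_self hx)).hasDerivWithinAt) ha hB bound ht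
  -- conclude: `‖f t‖ ≤ ε` for every `ε ∈ (0,1)`
  intro t ht
  have hnorm : ‖f t‖ ≤ 0 := by
    by_contra h
    push_neg at h
    set ε : ℝ := min (‖f t‖ / 2) (1 / 2) with hε_def
    have hε0 : 0 < ε := lt_min (by linarith) (by norm_num)
    have hε1 : ε < 1 := lt_of_le_of_lt (min_le_right _ _) (by norm_num)
    have hεf : ε < ‖f t‖ := lt_of_le_of_lt (min_le_left _ _) (by linarith)
    set L : ℝ := -Real.log ε * Real.exp (2 * C * t) with hL_def
    have hlogε : Real.log ε < 0 := Real.log_neg hε0 hε1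
    have hLpos : 0 < L := mul_pos (by linarith) (Real.exp_pos _)
    have := key L hLpos t ht
    have hexp : -(L * Real.exp (-(2 * C * t))) = Real.log ε := by
      rw [hL_def]
      rw [mul_assoc, ← Real.exp_add]
      simp
    rw [hexp, Real.exp_log hε0] at this
    linarith
  have hz : γ₁ t - γ₂ t = 0 := norm_le_zero_iff.mp hnorm
  exact sub_eq_zero.mp hz
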